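/- arXiv:2406.01470 — 3 statements merged into one kernel-verified Lean document; each statement's English description precedes it below -/
import Mathlib

section
/- Let Ω be a Hermitian matrix on ℂ^d (d ≥ 2), ψ a unit vector with Ωψ = λ₀ψ where λ₀ is the largest eigenvalue of Ω, and let λ₁ be the maximum of ⟨χ, Ωχ⟩ over unit vectors χ orthogonal to ψ (the second-largest eigenvalue). Then for every ε ∈ [0, 1], the supremum of Tr(Ωρ) over density matrices ρ satisfying ⟨ψ, ρψ⟩ ≤ 1 − ε equals λ₀ − (λ₀ − λ₁)ε. (Worst-case passing probability, Equations 3–4 / Appendix B.) -/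
open Matrix
open scoped ComplexOrder

variable {d : ℕ}

lemma trace_mul_vecMulVec (A : Matrix (Fin d) (Fin d) ℂ) (v : Fin d → ℂ) :
    (A * vecMulVec v (star v)).trace = star v ⬝ᵥ (A *ᵥ v) := by
  simp only [Matrix.trace, Matrix.diag_apply, Matrix.mul_apply, vecMulVec_apply,
    dotProduct, mulVec, Pi.star_apply, Finset.mul_sum]
  refine Finset.sum_congr rfl fun i _ => Finset.sum_congr rfl fun k _ => by ring

lemma vecMulVec_mulVec' (v w x : Fin d → ℂ) :
    vecMulVec v w *ᵥ x = (w ⬝ᵥ x) • v := by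
  funext i
  simp only [mulVec, dotProduct, vecMulVec_apply, Pi.smul_apply, smul_eq_mul, Finset.mul_sum,
    Finset.sum_mul]
  refine Finset.sum_congr rfl fun k _ => by ring

lemma psd_vecMulVec (v : Fin d → ℂ) : (vecMulVec v (star v)).PosSemidef := by
  exact posSemidef_vecMulVec_self_star v

lemma psd_real_smul {A : Matrix (Fin d) (Fin d) ℂ} (hA : A.PosSemidef) {c : ℝ} (hc : 0 ≤ c) :
    (((c : ℂ)) • A).PosSemidef := by
  refine PosSemidef.of_dotProduct_mulVec_nonneg ?_ fun x => ?_
  · unfold Matrix.IsHermitian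
    rw [conjTranspose_smul, hA.1]
    simp
  · rw [smul_mulVec, dotProduct_smul, smul_eq_mul]
    exact mul_nonneg (by exact_mod_cast hc) (hA.dotProduct_mulVec_nonneg x)

lemma psd_trace_re_nonneg {A : Matrix (Fin d) (Fin d) ℂ} (hA : A.PosSemidef) :
    0 ≤ A.trace.re := by
  have : ∀ i, 0 ≤ (A i i).re := by
    intro i
    have := hA.re_dotProduct_nonneg (Pi.single i 1)
    simpa [mulVec, dotProduct, Pi.single_apply, Finset.sum_ite_eq, Finset.mul_sum] using this
  simpa [Matrix.trace, Complex.re_sum] using Finset.sum_nonneg fun i _ => this i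

open scoped MatrixOrder

lemma psd_trace_mul_re_nonneg {A B : Matrix (Fin d) (Fin d) ℂ}
    (hA : A.PosSemidef) (hB : B.PosSemidef) : 0 ≤ (A * B).trace.re := by
  have hS := (CFC.sqrt_nonneg A).posSemidef
  have h1 : A * B = CFC.sqrt A * (CFC.sqrt A * B) := by
    rw [← mul_assoc, CFC.sqrt_mul_sqrt_self A hA.nonneg]
  rw [h1, Matrix.trace_mul_comm]
  have h2 : CFC.sqrt A * B * CFC.sqrt A = CFC.sqrt A * B * (CFC.sqrt A)ᴴ := by rw [hS.1]
  rw [h2]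
  exact psd_trace_re_nonneg (hB.mul_mul_conjTranspose_same (CFC.sqrt A))

lemma dot_self_real (w : Fin d → ℂ) : star w ⬝ᵥ w = (((star w ⬝ᵥ w).re : ℝ) : ℂ) := by
  have h := dotProduct_star_self_nonneg w
  have him : (star w ⬝ᵥ w).im = 0 := ((Complex.nonneg_iff.mp h).2).symm
  exact Complex.ext (by simp) (by simp [him])

lemma herm_dot_im (Ω : Matrix (Fin d) (Fin d) ℂ) (hΩ : Ω.IsHermitian) (x : Fin d → ℂ) :
    (star x ⬝ᵥ (Ω *ᵥ x)).im = 0 := by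
  rw [← Complex.conj_eq_iff_im]
  have h1 : (starRingEnd ℂ) (star x ⬝ᵥ (Ω *ᵥ x)) = star (star x ⬝ᵥ (Ω *ᵥ x)) := rfl
  rw [h1, ← star_dotProduct, star_mulVec, hΩ.eq, ← dotProduct_mulVec]

lemma orth_bound (Ω : Matrix (Fin d) (Fin d) ℂ) (ψ : Fin d → ℂ) (l₁ : ℝ)
    (hub : ∀ u : Fin d → ℂ, star u ⬝ᵥ u = 1 → star ψ ⬝ᵥ u = 0 →
      (star u ⬝ᵥ (Ω *ᵥ u)).re ≤ l₁)
    (w : Fin d → ℂ) (hw : star ψ ⬝ᵥ w = 0) :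
    (star w ⬝ᵥ (Ω *ᵥ w)).re ≤ l₁ * (star w ⬝ᵥ w).re := by
  set s := (star w ⬝ᵥ w).re with hs
  have hsreal : star w ⬝ᵥ w = (s : ℂ) := dot_self_real w
  have hs0 : 0 ≤ s := (Complex.nonneg_iff.mp (dotProduct_star_self_nonneg w)).1
  rcases eq_or_lt_of_le hs0 with h0 | hpos
  · have hw0 : w = 0 := by
      have : star w ⬝ᵥ w = 0 := by rw [hsreal, ← h0]; simp
      exact dotProduct_star_self_eq_zero.mp this
    simp [hw0, ← h0]
  · set c : ℝ := (Real.sqrt s)⁻¹ with hc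
    have hsq : Real.sqrt s * Real.sqrt s = s := Real.mul_self_sqrt hs0
    have hsqrtpos : 0 < Real.sqrt s := Real.sqrt_pos.mpr hpos
    have hcs : c * c * s = 1 := by
      rw [hc]; field_simp; rw [Real.sq_sqrt hs0]
    set u : Fin d → ℂ := (c : ℂ) • w with hu
    have hstaru : star u = (c : ℂ) • star w := by
      rw [hu, star_smul]; congr 1; simp [Complex.star_def, Complex.conj_ofReal]
    have hu1 : star u ⬝ᵥ u = 1 := by
      rw [hstaru, hu, smul_dotProduct, dotProduct_smul, hsreal]
      -- cast already aligned
      rw [smul_eq_mul, smul_eq_mul, ← mul_assoc]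
      exact_mod_cast congrArg (Complex.ofReal) hcs
    have hu0 : star ψ ⬝ᵥ u = 0 := by
      rw [hu, dotProduct_smul, hw, smul_zero]
    have hval : star u ⬝ᵥ (Ω *ᵥ u) = ((c * c : ℝ) : ℂ) * (star w ⬝ᵥ (Ω *ᵥ w)) := by
      rw [hstaru, hu, mulVec_smul, smul_dotProduct, dotProduct_smul]
      push_cast
      rw [smul_eq_mul, smul_eq_mul]; ring
    have hle := hub u hu1 hu0
    rw [hval, Complex.re_ofReal_mul] at hle
    set X := (star w ⬝ᵥ (Ω *ᵥ w)).re
    have h2 : s * (c * c * X) ≤ s * l₁ := mul_le_mul_of_nonneg_left hle hs0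
    calc X = (c * c * s) * X := by rw [hcs]; ring
    _ = s * (c * c * X) := by ring
    _ ≤ s * l₁ := h2
    _ = l₁ * s := mul_comm _ _

lemma quad_bound (Ω : Matrix (Fin d) (Fin d) ℂ) (hΩ : Ω.IsHermitian)
    (ψ : Fin d → ℂ) (hψ : star ψ ⬝ᵥ ψ = 1) (l₀ l₁ : ℝ)
    (hEig : Ω *ᵥ ψ = (l₀ : ℂ) • ψ)
    (horth : ∀ w, star ψ ⬝ᵥ w = 0 → (star w ⬝ᵥ (Ω *ᵥ w)).re ≤ l₁ * (star w ⬝ᵥ w).re)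
    (v : Fin d → ℂ) :
    (star v ⬝ᵥ (Ω *ᵥ v)).re ≤
      l₁ * (star v ⬝ᵥ v).re + (l₀ - l₁) * Complex.normSq (star ψ ⬝ᵥ v) := by
  set α := star ψ ⬝ᵥ v with hα
  set w := v - α • ψ with hwdef
  have hvw : v = α • ψ + w := by rw [hwdef]; abel
  have hw0 : star ψ ⬝ᵥ w = 0 := by
    rw [hwdef, dotProduct_sub, dotProduct_smul, hψ, smul_eq_mul, mul_one, ← hα, sub_self]
  have hw0' : star w ⬝ᵥ ψ = 0 := by
    rw [star_dotProduct, hw0, star_zero]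
  have hΩψw : star ψ ⬝ᵥ (Ω *ᵥ w) = 0 := by
    rw [dotProduct_mulVec]
    have h1 : star ψ ᵥ* Ω = (l₀ : ℂ) • star ψ := by
      have h2 : star ψ ᵥ* Ω = star (Ωᴴ *ᵥ ψ) := by
        rw [star_mulVec, conjTranspose_conjTranspose]
      rw [h2, hΩ.eq, hEig, star_smul]
      congr 1
      simp [Complex.star_def, Complex.conj_ofReal]
    rw [h1, smul_dotProduct, hw0, smul_zero]
  have hΩwψ : star w ⬝ᵥ (Ω *ᵥ ψ) = 0 := by
    rw [hEig, dotProduct_smul, hw0', smul_zero]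
  have hexp : star v ⬝ᵥ (Ω *ᵥ v)
      = ((Complex.normSq α : ℝ) : ℂ) * (l₀ : ℂ) + star w ⬝ᵥ (Ω *ᵥ w) := by
    conv_lhs => rw [hvw]
    rw [star_add, star_smul, mulVec_add, mulVec_smul, hEig]
    simp only [add_dotProduct, dotProduct_add, smul_dotProduct, dotProduct_smul,
      hψ, hΩψw, hΩwψ, hw0', smul_eq_mul, mul_zero, mul_one, add_zero, zero_add,
      Complex.normSq_eq_conj_mul_self, Complex.star_def]
    ring
  have hnormv : star v ⬝ᵥ v = ((Complex.normSq α : ℝ) : ℂ) + star w ⬝ᵥ w := by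
    conv_lhs => rw [hvw]
    rw [star_add, star_smul]
    simp only [add_dotProduct, dotProduct_add, smul_dotProduct, dotProduct_smul,
      hψ, hw0, hw0', smul_eq_mul, mul_zero, mul_one, add_zero, zero_add,
      Complex.normSq_eq_conj_mul_self, Complex.star_def]
    ring
  have hX := horth w hw0
  rw [hexp, hnormv, Complex.add_re, Complex.add_re, Complex.re_ofReal_mul]
  simp only [Complex.ofReal_re]
  nlinarith [Complex.normSq_nonneg α]

/-- Worst-case passing probability (Equations 3–4 / Appendix B): if the target
state `ψ` is an eigenvector of the Hermitian strategy `Ω` with largest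
eigenvalue `l₀`, and `l₁` is the maximum expectation over unit vectors
orthogonal to `ψ` (the second-largest eigenvalue), then for every `ε ∈ [0,1]`
the supremum of `Tr(Ωρ)` over density matrices with fidelity
`⟨ψ, ρψ⟩ ≤ 1 − ε` equals `l₀ − (l₀ − l₁)ε`. -/
theorem stmt_3 {d : ℕ} (hd : 2 ≤ d) (Ω : Matrix (Fin d) (Fin d) ℂ)
    (hΩ : Ω.IsHermitian) (ψ : Fin d → ℂ) (hψ : star ψ ⬝ᵥ ψ = 1)
    (l₀ l₁ : ℝ) (hEig : Ω *ᵥ ψ = (l₀ : ℂ) • ψ)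
    (hMax : ∀ v : Fin d → ℂ, star v ⬝ᵥ v = 1 → (star v ⬝ᵥ (Ω *ᵥ v)).re ≤ l₀)
    (hl₁ : IsGreatest {x : ℝ | ∃ χ : Fin d → ℂ, star χ ⬝ᵥ χ = 1 ∧
      star ψ ⬝ᵥ χ = 0 ∧ x = (star χ ⬝ᵥ (Ω *ᵥ χ)).re} l₁)
    (ε : ℝ) (hε : ε ∈ Set.Icc (0 : ℝ) 1) :
    IsLUB {x : ℝ | ∃ ρ : Matrix (Fin d) (Fin d) ℂ, ρ.PosSemidef ∧ ρ.trace = 1 ∧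
        (star ψ ⬝ᵥ (ρ *ᵥ ψ)).re ≤ 1 - ε ∧ x = (Ω * ρ).trace.re}
      (l₀ - (l₀ - l₁) * ε) := by
  obtain ⟨ε0, ε1⟩ := hε
  obtain ⟨χ, hχ1, hχ2, hχ3⟩ := hl₁.1
  have hub : ∀ u : Fin d → ℂ, star u ⬝ᵥ u = 1 → star ψ ⬝ᵥ u = 0 →
      (star u ⬝ᵥ (Ω *ᵥ u)).re ≤ l₁ := fun u h1 h2 => hl₁.2 ⟨u, h1, h2, rfl⟩
  have horth := orth_bound Ω ψ l₁ hub
  have hquad := quad_bound Ω hΩ ψ hψ l₀ l₁ hEig horth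
  have hν : l₁ ≤ l₀ := hχ3 ▸ hMax χ hχ1
  set P := vecMulVec ψ (star ψ) with hP
  set Q := vecMulVec χ (star χ) with hQ
  have hPψ : P *ᵥ ψ = ψ := by rw [hP, vecMulVec_mulVec', hψ, one_smul]
  have hχψ : star χ ⬝ᵥ ψ = 0 := by rw [star_dotProduct, hχ2, star_zero]
  have hQψ : Q *ᵥ ψ = 0 := by rw [hQ, vecMulVec_mulVec', hχψ, zero_smul]
  have hPherm : P.IsHermitian := (psd_vecMulVec ψ).1
  set M := (l₁ : ℂ) • (1 : Matrix (Fin d) (Fin d) ℂ) + ((l₀ - l₁ : ℝ) : ℂ) • P - Ω with hM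
  have hMherm : M.IsHermitian := by
    show Mᴴ = M
    rw [hM, conjTranspose_sub, conjTranspose_add, conjTranspose_smul, conjTranspose_smul,
      conjTranspose_one, hPherm.eq, hΩ.eq]
    congr 2 <;> simp [Complex.star_def, Complex.conj_ofReal]
  have hPx : ∀ x, star x ⬝ᵥ (P *ᵥ x) = ((Complex.normSq (star ψ ⬝ᵥ x) : ℝ) : ℂ) := by
    intro x
    rw [hP, vecMulVec_mulVec', dotProduct_smul, smul_eq_mul]
    have h : star x ⬝ᵥ ψ = star (star ψ ⬝ᵥ x) := star_dotProduct _ _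
    rw [h]
    simp only [Complex.star_def, Complex.normSq_eq_conj_mul_self]
    ring
  have hΩreal : ∀ x, star x ⬝ᵥ (Ω *ᵥ x) = (((star x ⬝ᵥ (Ω *ᵥ x)).re : ℝ) : ℂ) := fun x =>
    Complex.ext (by simp) (by simp [herm_dot_im Ω hΩ x])
  have hMpsd : M.PosSemidef := by
    refine PosSemidef.of_dotProduct_mulVec_nonneg hMherm fun x => ?_
    rw [hM, sub_mulVec, add_mulVec, smul_mulVec, smul_mulVec, one_mulVec,
      dotProduct_sub, dotProduct_add, dotProduct_smul, dotProduct_smul, hPx x,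
      dot_self_real x, hΩreal x]
    rw [smul_eq_mul, smul_eq_mul, Complex.nonneg_iff]
    constructor
    · simp only [Complex.sub_re, Complex.add_re, Complex.re_ofReal_mul, Complex.ofReal_re]
      linarith [hquad x]
    · simp
  refine IsGreatest.isLUB ⟨?_, ?_⟩
  · -- membership: achieving density matrix
    refine ⟨((1 - ε : ℝ) : ℂ) • P + ((ε : ℝ) : ℂ) • Q, ?_, ?_, ?_, ?_⟩
    · exact (psd_real_smul (psd_vecMulVec ψ) (by linarith)).add
        (psd_real_smul (psd_vecMulVec χ) ε0)
    · have htrP : P.trace = 1 := by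
        have h := trace_mul_vecMulVec (1 : Matrix (Fin d) (Fin d) ℂ) ψ
        rwa [one_mul, one_mulVec, hψ] at h
      have htrQ : Q.trace = 1 := by
        have h := trace_mul_vecMulVec (1 : Matrix (Fin d) (Fin d) ℂ) χ
        rwa [one_mul, one_mulVec, hχ1] at h
      rw [trace_add, trace_smul, trace_smul, htrP, htrQ, smul_eq_mul, smul_eq_mul]
      push_cast; ring
    · rw [add_mulVec, smul_mulVec, smul_mulVec, hPψ, hQψ, smul_zero, add_zero,
        dotProduct_smul, hψ, smul_eq_mul, mul_one]
      simp
    · have hΩP : (Ω * P).trace = (l₀ : ℂ) := by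
        rw [hP, trace_mul_vecMulVec, hEig, dotProduct_smul, hψ, smul_eq_mul, mul_one]
      have hΩQ : (Ω * Q).trace = star χ ⬝ᵥ (Ω *ᵥ χ) := by rw [hQ, trace_mul_vecMulVec]
      rw [mul_add, mul_smul_comm, mul_smul_comm, trace_add, trace_smul, trace_smul,
        hΩP, hΩQ, smul_eq_mul, smul_eq_mul]
      simp only [Complex.add_re, Complex.re_ofReal_mul, Complex.ofReal_re, ← hχ3]
      ring
  · -- upper bound
    rintro x ⟨ρ, hρpsd, hρtr, hρfid, rfl⟩
    have hΩdec : Ω = (l₁ : ℂ) • 1 + ((l₀ - l₁ : ℝ) : ℂ) • P - M := by rw [hM]; abel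
    have htr : (Ω * ρ).trace
        = (l₁ : ℂ) + ((l₀ - l₁ : ℝ) : ℂ) * (star ψ ⬝ᵥ (ρ *ᵥ ψ)) - (M * ρ).trace := by
      conv_lhs => rw [hΩdec]
      rw [sub_mul, add_mul, smul_mul_assoc, smul_mul_assoc, one_mul, trace_sub, trace_add,
        trace_smul, trace_smul, hρtr, trace_mul_comm P ρ, trace_mul_vecMulVec,
        smul_eq_mul, mul_one, smul_eq_mul]
    have hMρ := psd_trace_mul_re_nonneg hMpsd hρpsd
    rw [htr]
    simp only [Complex.sub_re, Complex.add_re, Complex.re_ofReal_mul, Complex.ofReal_re]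
    nlinarith [hρfid, hMρ, hν, ε0, ε1]
end

section
/- Fix λ₀ ∈ (0, 1) and define, for t > 0 sufficiently small (0 < t < min(λ₀, 1−λ₀)), f(t) = ½[exp(−D(λ₀ ‖ λ₀ − t/2)) + exp(−D(λ₀ − t ‖ λ₀ − t/2))]. Then lim_{t→0⁺} (f(t) − 1)/t² = −1/(8·λ₀·(1−λ₀)). (Second-order Taylor behaviour of the Chernoff bound on the symmetric error rate, Equation 43 in Appendix C; it yields the scaling N ∼ 8λ₀(1−λ₀)(ν ε)^{−2} ln δ^{−1}.) -/
open Filter Real Topology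

lemma phi_lim : Filter.Tendsto (fun x : ℝ => (Real.log (1+x) - x) / x^2)
    (nhdsWithin 0 {(0:ℝ)}ᶜ) (nhds (-1/2)) := by
  rw [← tendsto_sub_nhds_zero_iff]
  have hbnd : Filter.Tendsto (fun x : ℝ => |x| / (1 - |x|)) (nhdsWithin 0 {(0:ℝ)}ᶜ) (nhds 0) := by
    have hc : ContinuousAt (fun x : ℝ => |x| / (1 - |x|)) 0 := by
      apply ContinuousAt.div (continuous_abs.continuousAt)
      · exact (continuous_const.sub continuous_abs).continuousAt
      · norm_num
    have := hc.continuousWithinAt (s := {(0:ℝ)}ᶜ)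
    simpa using this.tendsto
  apply squeeze_zero_norm' _ hbnd
  have h1 : ∀ᶠ x : ℝ in nhds (0:ℝ), |x| < 1 := by
    have := eventually_abs_sub_lt (0:ℝ) one_pos
    simpa using this
  filter_upwards [h1.filter_mono nhdsWithin_le_nhds, self_mem_nhdsWithin] with x hx1 hx0
  have hx0' : x ≠ 0 := hx0
  have key := Real.abs_log_sub_add_sum_range_le (by rwa [abs_neg] : |(-x)| < 1) 2
  simp only [Finset.sum_range_succ, Finset.sum_range_zero] at key
  norm_num at key
  have hxsq : (0:ℝ) < x^2 := by positivity
  have heq : (Real.log (1+x) - x) / x^2 - (-1/2)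
      = (-x + x^2/2 + Real.log (1 + x)) / x^2 := by
    field_simp
    ring
  rw [Real.norm_eq_abs, heq, abs_div, abs_of_pos hxsq, div_le_iff₀ hxsq]
  calc |-x + x^2/2 + Real.log (1 + x)|
      ≤ |x| ^ 3 / (1 - |x|) := key
    _ = |x| / (1 - |x|) * x^2 := by
        rw [show |x| ^ 3 = |x| * x^2 by rw [pow_succ, pow_two, ← abs_mul, abs_mul_self]; ring]
        ring

set_option maxHeartbeats 1000000 in
/-- Second-order Taylor behaviour of the Chernoff bound on the symmetric
error rate (Equation 43 in Appendix C): with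
`D(a‖b) = a·ln(a/b) + (1−a)·ln((1−a)/(1−b))` and
`f(t) = ½[exp(−D(l₀ ‖ l₀ − t/2)) + exp(−D(l₀ − t ‖ l₀ − t/2))]`,
one has `lim_{t→0⁺} (f(t) − 1)/t² = −1/(8·l₀·(1−l₀))`. -/
theorem stmt_9 (l₀ : ℝ) (hl : l₀ ∈ Set.Ioo (0 : ℝ) 1)
    (D : ℝ → ℝ → ℝ)
    (hD : ∀ a b : ℝ, D a b =
      a * Real.log (a / b) + (1 - a) * Real.log ((1 - a) / (1 - b)))
    (f : ℝ → ℝ)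
    (hf : ∀ t : ℝ, f t =
      (Real.exp (-(D l₀ (l₀ - t / 2))) + Real.exp (-(D (l₀ - t) (l₀ - t / 2)))) / 2) :
    Filter.Tendsto (fun t : ℝ => (f t - 1) / t ^ 2)
      (nhdsWithin 0 (Set.Ioi 0))
      (nhds (-1 / (8 * l₀ * (1 - l₀)))) := by
  obtain ⟨hl0, hl1⟩ := hl
  have h1l : (0:ℝ) < 1 - l₀ := by linarith
  have hl0' : l₀ ≠ 0 := ne_of_gt hl0
  have h1l' : (1:ℝ) - l₀ ≠ 0 := ne_of_gt h1l
  set F := nhdsWithin (0:ℝ) (Set.Ioi 0) with hF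
  have hm : (0:ℝ) < min l₀ (1 - l₀) := lt_min hl0 h1l
  have hmem : ∀ᶠ t in F, t ∈ Set.Ioo (0:ℝ) (min l₀ (1-l₀)) :=
    Ioo_mem_nhdsGT_of_mem ⟨le_refl 0, hm⟩
  -- basic eventual facts
  have hfacts : ∀ᶠ t in F, 0 < t ∧ t < l₀ ∧ t < 1 - l₀ := by
    filter_upwards [hmem] with t ht
    exact ⟨ht.1, lt_of_lt_of_le ht.2 (min_le_left _ _), lt_of_lt_of_le ht.2 (min_le_right _ _)⟩
  -- tendsto of the four "x" functions into punctured nhds of 0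
  have comphelp : ∀ u : ℝ → ℝ, Filter.Tendsto u F (nhds 0) → (∀ᶠ t in F, u t ≠ 0) →
      Filter.Tendsto (fun t => (Real.log (1 + u t) - u t) / (u t)^2) F (nhds (-1/2)) := by
    intro u hu hne
    exact phi_lim.comp (tendsto_nhdsWithin_iff.2 ⟨hu, hne⟩)
  have hu1 : Filter.Tendsto (fun t : ℝ => -t/(2*l₀)) F (nhds 0) := by
    have : Continuous (fun t : ℝ => -t/(2*l₀)) := by continuity
    have := this.tendsto' 0 0 (by norm_num)
    exact this.mono_left nhdsWithin_le_nhds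
  have hv1 : Filter.Tendsto (fun t : ℝ => t/(2*(1-l₀))) F (nhds 0) := by
    have : Continuous (fun t : ℝ => t/(2*(1-l₀))) := by continuity
    have := this.tendsto' 0 0 (by norm_num)
    exact this.mono_left nhdsWithin_le_nhds
  have hu2 : Filter.Tendsto (fun t : ℝ => (t/2)/(l₀-t)) F (nhds 0) := by
    have hc : ContinuousAt (fun t : ℝ => (t/2)/(l₀-t)) 0 := by
      apply ContinuousAt.div (by fun_prop) (by fun_prop)
      simpa using hl0'
    have := hc.tendsto
    simp only [zero_div, sub_zero] at this
    exact this.mono_left nhdsWithin_le_nhds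
  have hv2 : Filter.Tendsto (fun t : ℝ => -(t/2)/(1-l₀+t)) F (nhds 0) := by
    have hc : ContinuousAt (fun t : ℝ => -(t/2)/(1-l₀+t)) 0 := by
      apply ContinuousAt.div (by fun_prop) (by fun_prop)
      simpa using h1l'
    have := hc.tendsto
    norm_num at this
    exact this.mono_left nhdsWithin_le_nhds
  have hphi1 := comphelp _ hu1 (by
    filter_upwards [hfacts] with t ⟨ht0, _, _⟩
    have : t / (2*l₀) > 0 := by positivity
    simp only [neg_div]; exact neg_ne_zero.2 (ne_of_gt this))
  have hphi2 := comphelp _ hv1 (by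
    filter_upwards [hfacts] with t ⟨ht0, _, _⟩
    positivity)
  have hphi3 := comphelp _ hu2 (by
    filter_upwards [hfacts] with t ⟨ht0, htl, _⟩
    have h1 : (0:ℝ) < t/2 := by positivity
    have h2 : (0:ℝ) < l₀ - t := by linarith
    positivity)
  have hphi4 := comphelp _ hv2 (by
    filter_upwards [hfacts] with t ⟨ht0, _, ht1⟩
    have h2 : (0:ℝ) < 1 - l₀ + t := by linarith
    have : (0:ℝ) < (t/2)/(1-l₀+t) := by positivity
    simp only [neg_div]; exact neg_ne_zero.2 (ne_of_gt this))
  set L : ℝ := -1 / (8 * l₀ * (1 - l₀)) with hL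
  -- limit of g₁ t / t²
  have hG1 : Filter.Tendsto (fun t : ℝ => (-(D l₀ (l₀ - t/2)))/t^2) F (nhds L) := by
    have hlim := (hphi1.div_const (4*l₀)).add (hphi2.div_const (4*(1-l₀)))
    have hval : (-1/2)/(4*l₀) + (-1/2)/(4*(1-l₀)) = L := by
      rw [hL]; field_simp; ring
    rw [hval] at hlim
    apply hlim.congr'
    filter_upwards [hfacts] with t ⟨ht0, htl, ht1⟩
    have hb : (0:ℝ) < l₀ - t/2 := by linarith
    have h1b : (0:ℝ) < 1 - (l₀ - t/2) := by linarith
    have ht0' : t ≠ 0 := ne_of_gt ht0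
    have hb' : l₀ - t/2 ≠ 0 := ne_of_gt hb
    have h1b' : 1 - (l₀ - t/2) ≠ 0 := ne_of_gt h1b
    have e1 : Real.log (l₀ / (l₀ - t/2)) = - Real.log (1 + (-t/(2*l₀))) := by
      rw [show (1:ℝ) + (-t/(2*l₀)) = (l₀ / (l₀ - t/2))⁻¹ by
        field_simp [hb', hl0']; ring, Real.log_inv, neg_neg]
    have e2 : Real.log ((1-l₀) / (1 - (l₀ - t/2))) = - Real.log (1 + t/(2*(1-l₀))) := by
      rw [show (1:ℝ) + t/(2*(1-l₀)) = ((1-l₀) / (1 - (l₀ - t/2)))⁻¹ by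
        field_simp [h1b', h1l']; ring, Real.log_inv, neg_neg]
    rw [hD, e1, e2]
    generalize Real.log (1 + -t/(2*l₀)) = A
    generalize Real.log (1 + t/(2*(1-l₀))) = B
    have hb' : l₀ - t/2 ≠ 0 := ne_of_gt hb
    have h1b' : 1 - (l₀ - t/2) ≠ 0 := ne_of_gt h1b
    field_simp
    ring
  -- limit of g₂ t / t²
  have hG2 : Filter.Tendsto (fun t : ℝ => (-(D (l₀-t) (l₀ - t/2)))/t^2) F (nhds L) := by
    have hden1 : Filter.Tendsto (fun t : ℝ => 4*(l₀-t)) F (nhds (4*l₀)) := by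
      have : Continuous (fun t : ℝ => 4*(l₀-t)) := by continuity
      have := this.tendsto' 0 (4*l₀) (by norm_num)
      exact this.mono_left nhdsWithin_le_nhds
    have hden2 : Filter.Tendsto (fun t : ℝ => 4*(1-l₀+t)) F (nhds (4*(1-l₀))) := by
      have : Continuous (fun t : ℝ => 4*(1-l₀+t)) := by continuity
      have := this.tendsto' 0 (4*(1-l₀)) (by norm_num)
      exact this.mono_left nhdsWithin_le_nhds
    have hlim := (hphi3.div hden1 (by positivity)).add (hphi4.div hden2 (by positivity))
    have hval : (-1/2)/(4*l₀) + (-1/2)/(4*(1-l₀)) = L := by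
      rw [hL]; field_simp; ring
    rw [hval] at hlim
    apply hlim.congr'
    filter_upwards [hfacts] with t ⟨ht0, htl, ht1⟩
    have ha : (0:ℝ) < l₀ - t := by linarith
    have h1a : (0:ℝ) < 1 - l₀ + t := by linarith
    have hb : (0:ℝ) < l₀ - t/2 := by linarith
    have h1b : (0:ℝ) < 1 - (l₀ - t/2) := by linarith
    have ht0' : t ≠ 0 := ne_of_gt ht0
    have ha0 : l₀ - t ≠ 0 := ne_of_gt ha
    have h1a0 : 1 - l₀ + t ≠ 0 := ne_of_gt h1a
    have hb0 : l₀ - t/2 ≠ 0 := ne_of_gt hb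
    have h1b0 : 1 - (l₀ - t/2) ≠ 0 := ne_of_gt h1b
    have e1 : Real.log ((l₀-t) / (l₀ - t/2)) = - Real.log (1 + (t/2)/(l₀-t)) := by
      rw [show (1:ℝ) + (t/2)/(l₀-t) = ((l₀-t) / (l₀ - t/2))⁻¹ by
        field_simp [ha0, hb0]; ring, Real.log_inv, neg_neg]
    have e2 : Real.log ((1-(l₀-t)) / (1 - (l₀ - t/2))) = - Real.log (1 + -(t/2)/(1-l₀+t)) := by
      have h1a0' : (1:ℝ) - (l₀ - t) ≠ 0 := ne_of_gt (by linarith)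
      rw [show (1:ℝ) + -(t/2)/(1-l₀+t) = ((1-(l₀-t)) / (1 - (l₀ - t/2)))⁻¹ by
        rw [inv_div, eq_div_iff h1a0']; field_simp [h1a0]; ring, Real.log_inv, neg_neg]
    simp only [Pi.div_apply]
    rw [hD, e1, e2]
    generalize Real.log (1 + t / 2 / (l₀ - t)) = A
    generalize Real.log (1 + -(t/2)/(1-l₀+t)) = B
    have ha' : l₀ - t ≠ 0 := ne_of_gt ha
    have h1a' : 1 - l₀ + t ≠ 0 := ne_of_gt h1a
    have hb' : l₀ - t/2 ≠ 0 := ne_of_gt hb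
    have h1b' : 1 - (l₀ - t/2) ≠ 0 := ne_of_gt h1b
    field_simp
    ring
  -- from g/t² → L deduce g → 0 and then (exp g - 1)/t² → L
  have hexp : ∀ g : ℝ → ℝ, Filter.Tendsto (fun t => g t / t^2) F (nhds L) →
      Filter.Tendsto (fun t => (Real.exp (g t) - 1) / t^2) F (nhds L) := by
    intro g hg
    have ht2 : Filter.Tendsto (fun t : ℝ => t^2) F (nhds 0) := by
      have : Continuous (fun t : ℝ => t^2) := by continuity
      have := this.tendsto' 0 0 (by norm_num)
      exact this.mono_left nhdsWithin_le_nhds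
    have hg0 : Filter.Tendsto g F (nhds 0) := by
      have := hg.mul ht2
      rw [mul_zero] at this
      apply this.congr'
      filter_upwards [hfacts] with t ⟨ht0, _, _⟩
      field_simp
    have hrem : Filter.Tendsto (fun t => (Real.exp (g t) - 1 - g t) / t^2) F (nhds 0) := by
      have hbnd : Filter.Tendsto (fun t => |g t / t^2| * |g t|) F (nhds 0) := by
        have := (hg.abs.mul hg0.abs)
        simpa using this
      apply squeeze_zero_norm' _ hbnd
      have hsmall : ∀ᶠ t in F, |g t| ≤ 1 := by
        have h1 : ∀ᶠ x : ℝ in nhds (0:ℝ), |x| ≤ 1 := by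
          filter_upwards [(by simpa using eventually_abs_sub_lt (0:ℝ) one_pos :
            ∀ᶠ x : ℝ in nhds 0, |x| < 1)] with x hx
          exact le_of_lt hx
        exact hg0.eventually h1
      filter_upwards [hfacts, hsmall] with t ⟨ht0, _, _⟩ hs
      have ht2' : (0:ℝ) < t^2 := by positivity
      have key := Real.abs_exp_sub_one_sub_id_le hs
      rw [Real.norm_eq_abs, abs_div, abs_of_pos ht2', div_le_iff₀ ht2']
      calc |Real.exp (g t) - 1 - g t| ≤ (g t)^2 := key
        _ = |g t / t^2| * |g t| * t^2 := by
            rw [abs_div, abs_of_pos ht2', div_mul_eq_mul_div, div_mul_eq_mul_div,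
              ← abs_mul, abs_mul_self]
            field_simp
    have := hg.add hrem
    rw [add_zero] at this
    apply this.congr
    intro t
    ring
  have hE1 := hexp _ hG1
  have hE2 := hexp _ hG2
  have hfinal := (hE1.add hE2).div_const 2
  have hval : (L + L)/2 = L := by ring
  rw [hval] at hfinal
  apply hfinal.congr
  intro t
  rw [hf]
  ring
end

section
/- Let n ≥ 2 and η : {1, …, n} → ℝ with 0 ≤ ηᵢ < 1/2 for all i. With P̃₀ = ⊗ᵢ[(1−ηᵢ)E₀ + ηᵢE₁] + ⊗ᵢ[ηᵢE₀ + (1−ηᵢ)E₁] on ℂ^{2^n} and GHZₙ = (e_{0…0} + e_{1…1})/√2, we have P̃₀·GHZₙ = [Πᵢ(1−ηᵢ) + Πᵢηᵢ]·GHZₙ, and for every x ∈ {0,1}^n other than 0…0 and 1…1, the eigenvalue μ_x of P̃₀ on e_x satisfies μ_x < Πᵢ(1−ηᵢ) + Πᵢηᵢ; hence Πᵢ(1−ηᵢ) + Πᵢηᵢ is the uniquely largest eigenvalue of P̃₀ among computational basis vectors outside span{e_{0…0}, e_{1…1}}. (The GHZ state attains the dominant eigenvalue of the noisy test P̃₀,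 Appendix E.) -/
open Matrix

/-- The `n`-fold tensor (Kronecker) product of single-qubit matrices,
realized on the index type `Fin n → Fin 2`:
`(⊗ᵢ Aᵢ)(x, y) = Πᵢ Aᵢ(xᵢ, yᵢ)`. -/
def tensorM {n : ℕ} (A : Fin n → Matrix (Fin 2) (Fin 2) ℂ) :
    Matrix (Fin n → Fin 2) (Fin n → Fin 2) ℂ :=
  fun x y => ∏ i, A i (x i) (y i)

lemma aux_prod_lt {n : ℕ} (s : Finset (Fin n)) (hs : s.Nonempty) (η : Fin n → ℝ)
    (hη : ∀ i, 0 ≤ η i ∧ η i < 1 / 2) :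
    ∏ i ∈ s, η i < ∏ i ∈ s, (1 - η i) := by
  obtain ⟨j, hj⟩ := hs
  rw [← Finset.prod_erase_mul _ _ hj, ← Finset.prod_erase_mul _ _ hj]
  have hpos : 0 < ∏ i ∈ s.erase j, (1 - η i) :=
    Finset.prod_pos fun i _ => by linarith [(hη i).2]
  have hle : ∏ i ∈ s.erase j, η i ≤ ∏ i ∈ s.erase j, (1 - η i) :=
    Finset.prod_le_prod (fun i _ => (hη i).1) (fun i _ => by linarith [(hη i).2])
  have hnn : 0 ≤ ∏ i ∈ s.erase j, η i := Finset.prod_nonneg fun i _ => (hη i).1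
  nlinarith [(hη j).1, (hη j).2]

/-- The GHZ state attains the dominant eigenvalue of the noisy test `P̃₀`
(Appendix E): for `0 ≤ ηᵢ < 1/2`, `P̃₀·GHZₙ = [Πᵢ(1−ηᵢ) + Πᵢηᵢ]·GHZₙ`, and
for every computational basis vector `e_x` with `x` not all-zeros nor
all-ones, the eigenvalue `μ_x` of `P̃₀` on `e_x` is strictly smaller than
`Πᵢ(1−ηᵢ) + Πᵢηᵢ`. -/
theorem stmt_16 (n : ℕ) (hn : 2 ≤ n) (η : Fin n → ℝ)
    (hη : ∀ i, 0 ≤ η i ∧ η i < 1 / 2)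
    (E₀ E₁ : Matrix (Fin 2) (Fin 2) ℂ)
    (hE₀ : E₀ = Matrix.single 0 0 1)
    (hE₁ : E₁ = Matrix.single 1 1 1)
    (Pt : Matrix (Fin n → Fin 2) (Fin n → Fin 2) ℂ)
    (hPt : Pt = tensorM (fun i => ((1 - η i : ℝ) : ℂ) • E₀ + ((η i : ℝ) : ℂ) • E₁)
      + tensorM (fun i => ((η i : ℝ) : ℂ) • E₀ + ((1 - η i : ℝ) : ℂ) • E₁))
    (GHZ : (Fin n → Fin 2) → ℂ)
    (hGHZ : GHZ = ((Real.sqrt 2 : ℂ))⁻¹ •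
      ((Pi.single (fun _ => 0) 1 : (Fin n → Fin 2) → ℂ) +
       (Pi.single (fun _ => 1) 1 : (Fin n → Fin 2) → ℂ))) :
    Pt *ᵥ GHZ = ((((∏ i, (1 - η i)) + ∏ i, η i : ℝ)) : ℂ) • GHZ ∧
    ∀ x : Fin n → Fin 2, x ≠ (fun _ => 0) → x ≠ (fun _ => 1) →
      ((∏ i ∈ Finset.univ.filter (fun i => x i = 0), (1 - η i)) *
          ∏ i ∈ Finset.univ.filter (fun i => x i = 1), η i) +
        ((∏ i ∈ Finset.univ.filter (fun i => x i = 0), η i) *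
          ∏ i ∈ Finset.univ.filter (fun i => x i = 1), (1 - η i))
        < (∏ i, (1 - η i)) + ∏ i, η i := by
  constructor
  · -- eigenvector part
    set z0 : Fin n → Fin 2 := fun _ => 0 with hz0
    set z1 : Fin n → Fin 2 := fun _ => 1 with hz1
    set c : ℂ := ((((∏ i, (1 - η i)) + ∏ i, η i : ℝ)) : ℂ) with hc
    have hA0 : ∀ i (a : Fin 2),
        (((1 - η i : ℝ) : ℂ) • E₀ + ((η i : ℝ) : ℂ) • E₁) a 0
          = if a = 0 then ((1 - η i : ℝ) : ℂ) else 0 := by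
      intro i a
      fin_cases a <;> simp [hE₀, hE₁, Matrix.single]
    have hA1 : ∀ i (a : Fin 2),
        (((1 - η i : ℝ) : ℂ) • E₀ + ((η i : ℝ) : ℂ) • E₁) a 1
          = if a = 1 then ((η i : ℝ) : ℂ) else 0 := by
      intro i a
      fin_cases a <;> simp [hE₀, hE₁, Matrix.single]
    have hB0 : ∀ i (a : Fin 2),
        (((η i : ℝ) : ℂ) • E₀ + ((1 - η i : ℝ) : ℂ) • E₁) a 0
          = if a = 0 then ((η i : ℝ) : ℂ) else 0 := by
      intro i a
      fin_cases a <;> simp [hE₀, hE₁, Matrix.single]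
    have hB1 : ∀ i (a : Fin 2),
        (((η i : ℝ) : ℂ) • E₀ + ((1 - η i : ℝ) : ℂ) • E₁) a 1
          = if a = 1 then ((1 - η i : ℝ) : ℂ) else 0 := by
      intro i a
      fin_cases a <;> simp [hE₀, hE₁, Matrix.single]
    have hcol0 : ∀ x, Pt x z0 = if x = z0 then c else 0 := by
      intro x
      have h1 : (∏ i, (if x i = 0 then ((1 - η i : ℝ) : ℂ) else 0))
          = if x = z0 then ((∏ i, (1 - η i) : ℝ) : ℂ) else 0 := by
        rw [Fintype.prod_ite_zero]
        by_cases h : x = z0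
        · simp [h, hz0, funext_iff, Complex.ofReal_prod]
        · have : ¬ ∀ i, x i = 0 := by
            intro hall; exact h (funext hall)
          simp [h, this]
      have h2 : (∏ i, (if x i = 0 then ((η i : ℝ) : ℂ) else 0))
          = if x = z0 then ((∏ i, η i : ℝ) : ℂ) else 0 := by
        rw [Fintype.prod_ite_zero]
        by_cases h : x = z0
        · simp [h, hz0, funext_iff, Complex.ofReal_prod]
        · have : ¬ ∀ i, x i = 0 := by
            intro hall; exact h (funext hall)
          simp [h, this]
      rw [hPt]
      simp only [Matrix.add_apply]
      simp only [tensorM]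
      simp only [hz0]
      simp_rw [hA0, hB0]
      rw [h1, h2]
      by_cases h : x = z0
      · simp only [if_pos h, if_pos (h.trans hz0), hc]; push_cast; ring
      · have h' : ¬ x = fun _ => 0 := fun e => h (e.trans hz0.symm)
        simp [h, h']
    have hcol1 : ∀ x, Pt x z1 = if x = z1 then c else 0 := by
      intro x
      have h1 : (∏ i, (if x i = 1 then ((η i : ℝ) : ℂ) else 0))
          = if x = z1 then ((∏ i, η i : ℝ) : ℂ) else 0 := by
        rw [Fintype.prod_ite_zero]
        by_cases h : x = z1
        · simp [h, hz1, funext_iff, Complex.ofReal_prod]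
        · have : ¬ ∀ i, x i = 1 := by
            intro hall; exact h (funext hall)
          simp [h, this]
      have h2 : (∏ i, (if x i = 1 then ((1 - η i : ℝ) : ℂ) else 0))
          = if x = z1 then ((∏ i, (1 - η i) : ℝ) : ℂ) else 0 := by
        rw [Fintype.prod_ite_zero]
        by_cases h : x = z1
        · simp [h, hz1, funext_iff, Complex.ofReal_prod]
        · have : ¬ ∀ i, x i = 1 := by
            intro hall; exact h (funext hall)
          simp [h, this]
      rw [hPt]
      simp only [Matrix.add_apply]
      simp only [tensorM]
      simp only [hz1]
      simp_rw [hA1, hB1]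
      rw [h1, h2]
      by_cases h : x = z1
      · simp only [if_pos h, if_pos (h.trans hz1), hc]; push_cast; ring
      · have h' : ¬ x = fun _ => 1 := fun e => h (e.trans hz1.symm)
        simp [h, h']
    have hz01 : z0 ≠ z1 := by
      intro h
      have := congrFun h ⟨0, by omega⟩
      simp [hz0, hz1] at this
    funext x
    rw [hGHZ]
    simp only [Matrix.mulVec_smul, Matrix.mulVec_add, Matrix.mulVec_single,
      Pi.smul_apply, Pi.add_apply, smul_eq_mul, Matrix.col_apply, MulOpposite.op_one, one_smul]
    rw [hcol0 x, hcol1 x]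
    by_cases h0 : x = z0
    · simp [h0, hz01, Pi.single_apply, Ne.symm hz01]
      ring
    · by_cases h1 : x = z1
      · simp [h0, h1, Pi.single_apply, hz01, Ne.symm hz01]
        ring
      · simp [h0, h1, Pi.single_apply]
  · -- strict inequality part
    intro x hx0 hx1
    classical
    set S0 := Finset.univ.filter (fun i => x i = 0) with hS0
    set S1 := Finset.univ.filter (fun i => x i = 1) with hS1
    have hfin2 : ∀ i, x i ≠ 0 → x i = 1 := by
      intro i h
      omega
    have hS1c : S1 = Finset.univ.filter (fun i => ¬ x i = 0) := by
      ext i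
      simp only [hS1, Finset.mem_filter, Finset.mem_univ, true_and]
      constructor
      · intro h; rw [h]; exact one_ne_zero
      · exact hfin2 i
    have hsplit : ∀ f : Fin n → ℝ, (∏ i, f i) = (∏ i ∈ S0, f i) * ∏ i ∈ S1, f i := by
      intro f
      rw [hS1c, hS0, Finset.prod_filter_mul_prod_filter_not]
    have hS0ne : S0.Nonempty := by
      by_contra h
      apply hx1
      funext i
      rw [Finset.not_nonempty_iff_eq_empty, hS0, Finset.filter_eq_empty_iff] at h
      exact hfin2 i (h (Finset.mem_univ i))
    have hS1ne : S1.Nonempty := by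
      by_contra h
      apply hx0
      funext i
      rw [Finset.not_nonempty_iff_eq_empty, hS1, Finset.filter_eq_empty_iff] at h
      have := h (Finset.mem_univ i)
      by_contra h2
      exact this (hfin2 i h2)
    rw [hsplit (fun i => 1 - η i), hsplit η]
    have h1 : ∏ i ∈ S0, η i < ∏ i ∈ S0, (1 - η i) := aux_prod_lt S0 hS0ne η hη
    have h2 : ∏ i ∈ S1, η i < ∏ i ∈ S1, (1 - η i) := aux_prod_lt S1 hS1ne η hη
    have hnn0 : 0 ≤ ∏ i ∈ S0, η i := Finset.prod_nonneg fun i _ => (hη i).1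
    have hnn1 : 0 ≤ ∏ i ∈ S1, η i := Finset.prod_nonneg fun i _ => (hη i).1
    nlinarith
end
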